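/- Let 𝒫 ⊂ ℝ² be a finite set of points not all on one line, and let Q ∈ 𝒫 be a vertex of 𝒫 (an extreme point of its convex hull). Let Q̄ ∈ ℝ² and δ > 0 with ‖Q − Q̄‖ < δ. Assume there exists r > 0 with ‖Q‖ > r such that for every other vertex P_j ∈ 𝒫 \ {Q} one has ⟨Q, Q − P_j⟩ / (‖Q‖·‖Q − P_j‖) ≥ δ/r. Then for every point A in Circ_δ(Q̄) ∩ 𝒫° it holds that ‖Q‖ > ‖A‖, i.e. Q is δ-locally maximally distant with respect to Q̄. -/

import Mathlib

open scoped RealInnerProductSpace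

/-- An extreme point of a set is not in its interior (in a nontrivial normed space). -/
lemma extremePoint_not_mem_interior {E : Type*} [NormedAddCommGroup E] [NormedSpace ℝ E]
    [Nontrivial E] {s : Set E} {Q : E} (hQ : Q ∈ s.extremePoints ℝ) : Q ∉ interior s := by
  intro hQi
  obtain ⟨v, hv⟩ := exists_ne (0 : E)
  obtain ⟨ε, hε, hball⟩ := Metric.isOpen_iff.1 isOpen_interior Q hQi
  set u : E := (ε / (2 * ‖v‖)) • v with hu
  have hvpos : 0 < ‖v‖ := norm_pos_iff.2 hv
  have hunorm : ‖u‖ = ε / 2 := by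
    rw [hu, norm_smul, Real.norm_eq_abs, abs_of_pos (by positivity)]
    field_simp
  have hune : u ≠ 0 := by
    intro h
    rw [h, norm_zero] at hunorm
    linarith
  have h1 : Q + u ∈ s := interior_subset (hball (by
    simp [Metric.mem_ball, dist_eq_norm, hunorm]; linarith))
  have h2 : Q - u ∈ s := interior_subset (hball (by
    rw [Metric.mem_ball, dist_eq_norm, show Q - u - Q = -u by abel, norm_neg, hunorm]
    linarith))
  have hseg : Q ∈ openSegment ℝ (Q + u) (Q - u) := by
    refine ⟨1/2, 1/2, by norm_num, by norm_num, by norm_num, ?_⟩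
    rw [smul_add, smul_sub]
    match_scalars <;> ring
  have heq := hQ.2 h1 h2 hseg
  apply hune
  have : u = Q + u - Q := by abel
  rw [this, heq, sub_self]

/-- A sufficient criterion for a vertex `Q` of a polygon to be δ-locally maximally
distant with respect to `Q'`: all points `A` of the open disk of radius δ around `Q'`
which lie in the interior of the convex hull satisfy `‖A‖ < ‖Q‖`. -/
theorem delta_LMD_of_acute
    (V : Finset (EuclideanSpace ℝ (Fin 2)))
    (hline : ¬ Collinear ℝ (V : Set (EuclideanSpace ℝ (Fin 2))))
    (Q : EuclideanSpace ℝ (Fin 2)) (hQV : Q ∈ V)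
    (hQvert : Q ∈ (convexHull ℝ (V : Set (EuclideanSpace ℝ (Fin 2)))).extremePoints ℝ)
    (Q' : EuclideanSpace ℝ (Fin 2)) (δ : ℝ) (hδ : 0 < δ) (hQQ' : ‖Q - Q'‖ < δ)
    (r : ℝ) (hr : 0 < r) (hQr : ‖Q‖ > r)
    (hacute : ∀ Pj ∈ V,
      Pj ∈ (convexHull ℝ (V : Set (EuclideanSpace ℝ (Fin 2)))).extremePoints ℝ →
      Pj ≠ Q → ⟪Q, Q - Pj⟫ / (‖Q‖ * ‖Q - Pj‖) ≥ δ / r) :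
    ∀ A ∈ Metric.ball Q' δ ∩
      interior (convexHull ℝ (V : Set (EuclideanSpace ℝ (Fin 2)))), ‖Q‖ > ‖A‖ := by
  intro A hA
  obtain ⟨hA1, hA2⟩ := hA
  set s : Set (EuclideanSpace ℝ (Fin 2)) := (V : Set (EuclideanSpace ℝ (Fin 2)))
  set K := convexHull ℝ s with hK
  set Ex := K.extremePoints ℝ with hEx
  -- K equals the convex hull of its extreme points
  have hExV : Ex ⊆ s := extremePoints_convexHull_subset
  have hExfin : Ex.Finite := V.finite_toSet.subset hExV
  have hKeq : K = convexHull ℝ Ex := by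
    have h1 : closure (convexHull ℝ Ex) = K :=
      closure_convexHull_extremePoints (V.finite_toSet.isCompact_convexHull ℝ)
        (convex_convexHull ℝ s)
    rw [← h1, (hExfin.isClosed_convexHull ℝ).closure_eq]
  have hAK : A ∈ convexHull ℝ Ex := by rw [← hKeq]; exact interior_subset hA2
  obtain ⟨ι, _, w, z, hw₀, hw₁, hz, hx⟩ := mem_convexHull_iff_exists_fintype.1 hAK
  -- basic positivity facts
  have hQpos : (0:ℝ) < ‖Q‖ := lt_trans hr hQr
  have hdrpos : (0:ℝ) < δ / r := div_pos hδ hr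
  -- A ≠ Q since Q is extreme and A is interior
  have hAQ : A ≠ Q := by
    intro h
    exact extremePoint_not_mem_interior hQvert (h ▸ hA2)
  have hd : (0:ℝ) < ‖Q - A‖ := by
    rw [norm_pos_iff, sub_ne_zero]; exact fun h => hAQ h.symm
  -- ‖Q - A‖ < 2δ
  have hd2 : ‖Q - A‖ < 2 * δ := by
    have : ‖Q - A‖ ≤ ‖Q - Q'‖ + ‖Q' - A‖ := by
      have := norm_add_le (Q - Q') (Q' - A)
      rwa [show Q - Q' + (Q' - A) = Q - A by abel] at this
    have hAQ' : ‖Q' - A‖ < δ := by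
      rw [Metric.mem_ball, dist_eq_norm] at hA1
      rwa [norm_sub_rev]
    linarith
  -- pointwise bound: ⟪Q, Q - z i⟫ ≥ (δ/r) * (‖Q‖ * ‖Q - z i‖)
  have hpt : ∀ i, (δ / r) * (‖Q‖ * ‖Q - z i‖) ≤ ⟪Q, Q - z i⟫ := by
    intro i
    by_cases h : z i = Q
    · simp [h]
    · have hzV : z i ∈ V := hExV (hz i)
      have hne : ‖Q - z i‖ ≠ 0 := by
        rw [norm_ne_zero_iff, sub_ne_zero]; exact fun hh => h hh.symm
      have hdenpos : 0 < ‖Q‖ * ‖Q - z i‖ :=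
        mul_pos hQpos (lt_of_le_of_ne (norm_nonneg _) (Ne.symm hne))
      have := hacute (z i) hzV (hz i) h
      rw [ge_iff_le, le_div_iff₀ hdenpos] at this
      linarith
  -- Q - A = ∑ w i • (Q - z i)
  have hQA : Q - A = ∑ i, w i • (Q - z i) := by
    simp only [smul_sub]
    rw [Finset.sum_sub_distrib, ← Finset.sum_smul, hw₁, one_smul, hx]
  -- S := ∑ w i * ‖Q - z i‖
  set S : ℝ := ∑ i, w i * ‖Q - z i‖ with hS
  have hSd : ‖Q - A‖ ≤ S := by
    rw [hQA]
    refine (norm_sum_le _ _).trans (le_of_eq ?_)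
    refine Finset.sum_congr rfl fun i _ => ?_
    rw [norm_smul, Real.norm_eq_abs, abs_of_nonneg (hw₀ i)]
  have hinner : (δ / r) * (‖Q‖ * S) ≤ ⟪Q, Q - A⟫ := by
    rw [hQA, inner_sum]
    have : ∀ i, ⟪Q, w i • (Q - z i)⟫ = w i * ⟪Q, Q - z i⟫ := fun i => real_inner_smul_right _ _ _
    simp only [this]
    rw [hS, Finset.mul_sum, Finset.mul_sum]
    refine Finset.sum_le_sum fun i _ => ?_
    rw [show δ / r * (‖Q‖ * (w i * ‖Q - z i‖)) = w i * (δ / r * (‖Q‖ * ‖Q - z i‖)) by ring]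
    exact mul_le_mul_of_nonneg_left (hpt i) (hw₀ i)
  -- chain: ⟪Q, Q-A⟫ ≥ (δ/r)‖Q‖S ≥ (δ/r)‖Q‖‖Q-A‖ > δ‖Q-A‖ > ‖Q-A‖²/2
  have hkey : ‖Q - A‖ ^ 2 / 2 < ⟪Q, Q - A⟫ := by
    have h1 : (δ / r) * (‖Q‖ * ‖Q - A‖) ≤ (δ / r) * (‖Q‖ * S) := by
      have := mul_le_mul_of_nonneg_left hSd (le_of_lt hQpos)
      nlinarith
    have h2 : δ * ‖Q - A‖ < (δ / r) * (‖Q‖ * ‖Q - A‖) := by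
      have he : δ / r * r = δ := div_mul_cancel₀ δ (ne_of_gt hr)
      have h3 : δ / r * r < δ / r * ‖Q‖ := (mul_lt_mul_iff_right₀ hdrpos).2 hQr
      rw [he] at h3
      calc δ * ‖Q - A‖ < (δ / r * ‖Q‖) * ‖Q - A‖ := (mul_lt_mul_iff_left₀ hd).2 h3
        _ = δ / r * (‖Q‖ * ‖Q - A‖) := by ring
    nlinarith
  -- conclude
  have hsq : ‖A‖ ^ 2 < ‖Q‖ ^ 2 := by
    have hexp : ‖A‖ ^ 2 = ‖Q‖ ^ 2 - 2 * ⟪Q, Q - A⟫ + ‖Q - A‖ ^ 2 := by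
      have h := @norm_sub_sq_real (EuclideanSpace ℝ (Fin 2)) _ _ Q (Q - A)
      rw [show Q - (Q - A) = A by abel] at h
      linarith [h]
    linarith
  exact lt_of_pow_lt_pow_left₀ 2 (norm_nonneg Q) hsq
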